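/- Let A be a δ-ring, d ∈ A, and u ∈ A an invertible element. Then the principal ideals generated by the images of δ(d) and δ(ud) in A/(d) coincide. In particular, if d is a non-zero-divisor, the ideal δ(d)·(A/(d)) depends only on the ideal (d) and not on the choice of generator d. -/

import Mathlib

/-- A `δ`-ring (relative to the prime `p`): a commutative ring `R` together with an
operation `δ : R → R` satisfying `δ(1) = 0`, the additivity law
`δ(x+y) = δ(x) + δ(y) - ∑_{j=1}^{p-1} (1/p)·C(p,j)·x^{p-j}·y^j`
(note that `C(p,j)/p` is an integer for `0 < j < p` when `p` is prime), and
`δ(xy) = x^p δ(y) + y^p δ(x) + p δ(x) δ(y)`. -/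
class DeltaRing (p : ℕ) (R : Type*) [CommRing R] where
  δ : R → R
  δ_one : δ 1 = 0
  δ_add : ∀ x y : R, δ (x + y) =
    δ x + δ y - ∑ j ∈ Finset.Ioo 0 p, ((p.choose j / p : ℕ) : R) * x ^ (p - j) * y ^ j
  δ_mul : ∀ x y : R, δ (x * y) = x ^ p * δ y + y ^ p * δ x + (p : R) * δ x * δ y

/-- The Frobenius lift `φ(x) = x^p + p·δ(x)` associated to a `δ`-structure; it is a ring
endomorphism lifting the Frobenius modulo `p`. -/
def DeltaRing.phi (p : ℕ) (R : Type*) [CommRing R] [DeltaRing p R] : R → R :=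
  fun x => x ^ p + (p : R) * DeltaRing.δ (p := p) x

lemma phi_mul' (p : ℕ) (R : Type*) [CommRing R] [DeltaRing p R] (x y : R) :
    DeltaRing.phi p R (x * y) = DeltaRing.phi p R x * DeltaRing.phi p R y := by
  simp only [DeltaRing.phi, DeltaRing.δ_mul, mul_pow]
  ring

lemma phi_isUnit (p : ℕ) (R : Type*) [CommRing R] [DeltaRing p R] {u : R}
    (hu : IsUnit u) : IsUnit (DeltaRing.phi p R u) := by
  obtain ⟨v, hv⟩ := hu.exists_right_inv
  refine IsUnit.of_mul_eq_one (a := _) (DeltaRing.phi p R v) ?_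
  rw [← phi_mul', hv]
  simp [DeltaRing.phi, DeltaRing.δ_one]

lemma key (p : ℕ) [Fact p.Prime] (A : Type*) [CommRing A] [DeltaRing p A]
    (d u : A) (hu : IsUnit u) :
    Ideal.span {Ideal.Quotient.mk (Ideal.span {d}) (DeltaRing.δ (p := p) (u * d))} =
      Ideal.span {Ideal.Quotient.mk (Ideal.span {d}) (DeltaRing.δ (p := p) d)} := by
  have hp : 0 < p := (Fact.out : p.Prime).pos
  have hmk : Ideal.Quotient.mk (Ideal.span {d}) d = 0 := by
    rw [Ideal.Quotient.eq_zero_iff_mem]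
    exact Ideal.mem_span_singleton_self d
  have h1 : Ideal.Quotient.mk (Ideal.span {d}) (DeltaRing.δ (p := p) (u * d)) =
      Ideal.Quotient.mk (Ideal.span {d}) (DeltaRing.phi p A u) *
        Ideal.Quotient.mk (Ideal.span {d}) (DeltaRing.δ (p := p) d) := by
    rw [DeltaRing.δ_mul, DeltaRing.phi]
    simp only [map_add, map_mul, map_pow, map_natCast, hmk,
      zero_pow hp.ne', zero_mul, add_zero]
    ring
  rw [h1]
  exact Ideal.span_singleton_mul_left_unit ((phi_isUnit p A hu).map _) _

theorem stmt_9 (p : ℕ) [Fact p.Prime] (A : Type*) [CommRing A] [DeltaRing p A]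
    (d u : A) (hu : IsUnit u) :
    (Ideal.span {Ideal.Quotient.mk (Ideal.span {d}) (DeltaRing.δ (p := p) (u * d))} =
      Ideal.span {Ideal.Quotient.mk (Ideal.span {d}) (DeltaRing.δ (p := p) d)}) ∧
    (d ∈ nonZeroDivisors A → ∀ d' : A, Ideal.span {d'} = Ideal.span {d} →
      Ideal.span {Ideal.Quotient.mk (Ideal.span {d}) (DeltaRing.δ (p := p) d')} =
        Ideal.span {Ideal.Quotient.mk (Ideal.span {d}) (DeltaRing.δ (p := p) d)}) := by
  refine ⟨key p A d u hu, fun hd d' hspan => ?_⟩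
  -- d' = v * d for a unit v
  have h1 : d' ∈ Ideal.span {d} := hspan ▸ Ideal.mem_span_singleton_self d'
  have h2 : d ∈ Ideal.span {d'} := hspan.symm ▸ Ideal.mem_span_singleton_self d
  obtain ⟨a, ha⟩ := Ideal.mem_span_singleton'.mp h1
  obtain ⟨b, hb⟩ := Ideal.mem_span_singleton'.mp h2
  have hba : b * a = 1 := by
    have h3 : (b * a) * d = 1 * d := by rw [one_mul]; nth_rw 2 [← hb]; rw [← ha]; ring
    exact (mul_cancel_right_mem_nonZeroDivisors hd).mp h3
  have hua : IsUnit a := IsUnit.of_mul_eq_one (a := a) b (by rwa [mul_comm])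
  rw [← ha]
  exact key p A d a hua
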